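/- arXiv:1704.01287 — 4 statements merged into one kernel-verified Lean document; each statement's English description precedes it below -/
import Mathlib

section
/- Let u∞ ∈ (0,∞)^N be a complex balanced equilibrium of a reaction network. Then for all i, j ∈ {1,…,N}, ∑_{r=1}^R k_r u∞^{y_r} y_{r,i} y_{r,j} = ∑_{r=1}^R k_r u∞^{y_r} y_{r,i}' y_{r,j}'. -/
open scoped Classical BigOperators

/-- For a complex balanced equilibrium `u∞`, the mixed second moments of reactant and
product stoichiometric coefficients weighted by `k_r u∞^{y_r}` coincide. -/
theorem complex_balance_mixed_moment
    {N R : ℕ} (y y' : Fin R → Fin N → ℝ) (k : Fin R → ℝ)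
    (hy : ∀ r i, 0 ≤ y r i) (hy' : ∀ r i, 0 ≤ y' r i) (hk : ∀ r, 0 < k r)
    (u : Fin N → ℝ) (hu : ∀ i, 0 < u i)
    (hcb : ∀ c : Fin N → ℝ,
      ∑ r ∈ Finset.univ.filter (fun r => y r = c), k r * ∏ j, u j ^ y r j
        = ∑ r ∈ Finset.univ.filter (fun r => y' r = c), k r * ∏ j, u j ^ y r j) :
    ∀ i j : Fin N,
      ∑ r, k r * (∏ l, u l ^ y r l) * (y r i * y r j)
        = ∑ r, k r * (∏ l, u l ^ y r l) * (y' r i * y' r j) := by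
  intro i j
  classical
  set S : Finset (Fin N → ℝ) := Finset.univ.image y ∪ Finset.univ.image y' with hS
  have hyS : ∀ r, y r ∈ S := fun r =>
    Finset.mem_union_left _ (Finset.mem_image_of_mem y (Finset.mem_univ r))
  have hy'S : ∀ r, y' r ∈ S := fun r =>
    Finset.mem_union_right _ (Finset.mem_image_of_mem y' (Finset.mem_univ r))
  have h1 : ∑ r, k r * (∏ l, u l ^ y r l) * (y r i * y r j)
      = ∑ c ∈ S, (∑ r ∈ Finset.univ.filter (fun r => y r = c),
          k r * ∏ l, u l ^ y r l) * (c i * c j) := by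
    rw [← Finset.sum_fiberwise_of_maps_to (fun r _ => hyS r)
      (fun r => k r * (∏ l, u l ^ y r l) * (y r i * y r j))]
    refine Finset.sum_congr rfl fun c _ => ?_
    rw [Finset.sum_mul]
    refine Finset.sum_congr rfl fun r hr => ?_
    rw [(Finset.mem_filter.mp hr).2]
  have h2 : ∑ r, k r * (∏ l, u l ^ y r l) * (y' r i * y' r j)
      = ∑ c ∈ S, (∑ r ∈ Finset.univ.filter (fun r => y' r = c),
          k r * ∏ l, u l ^ y r l) * (c i * c j) := by
    rw [← Finset.sum_fiberwise_of_maps_to (fun r _ => hy'S r)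
      (fun r => k r * (∏ l, u l ^ y r l) * (y' r i * y' r j))]
    refine Finset.sum_congr rfl fun c _ => ?_
    rw [Finset.sum_mul]
    refine Finset.sum_congr rfl fun r hr => ?_
    rw [(Finset.mem_filter.mp hr).2]
  rw [h1, h2]
  exact Finset.sum_congr rfl fun c _ => by rw [hcb c]
end

section
/- Let u∞ ∈ (0,∞)^N be a complex balanced equilibrium and define the linearized operator L_i v = ∑_{r=1}^R k_r u∞^{y_r} ∑_{j=1}^N (y_{r,i}' − y_{r,i}) y_{r,j} v_j / u_{j,∞} for v ∈ ℝ^N. Then for all v ∈ ℝ^N, ∑_{i=1}^N (L_i v) · (v_i / u_{i,∞}) = −(1/2) ∑_{r=1}^R k_r u∞^{y_r} ( ∑_{i=1}^N (y_{r,i}' − y_{r,i}) v_i / u_{i,∞} )^2. -/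
open scoped Classical BigOperators

/-- The quadratic-form identity for the linearised operator of a complex balanced system. -/
theorem linearised_operator_identity
    {N R : ℕ} (y y' : Fin R → Fin N → ℝ) (k : Fin R → ℝ)
    (hy : ∀ r i, 0 ≤ y r i) (hy' : ∀ r i, 0 ≤ y' r i) (hk : ∀ r, 0 < k r)
    (u : Fin N → ℝ) (hu : ∀ i, 0 < u i)
    (hcb : ∀ c : Fin N → ℝ,
      ∑ r ∈ Finset.univ.filter (fun r => y r = c), k r * ∏ j, u j ^ y r j
        = ∑ r ∈ Finset.univ.filter (fun r => y' r = c), k r * ∏ j, u j ^ y r j)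
    (L : (Fin N → ℝ) → Fin N → ℝ)
    (hL : ∀ v i, L v i =
      ∑ r, k r * (∏ j, u j ^ y r j) * ∑ j, (y' r i - y r i) * y r j * (v j / u j)) :
    ∀ v : Fin N → ℝ,
      ∑ i, L v i * (v i / u i)
        = -(1/2) * ∑ r, k r * (∏ j, u j ^ y r j)
            * (∑ i, (y' r i - y r i) * (v i / u i)) ^ 2 := by
  intro v
  set q : Fin R → ℝ := fun r => k r * ∏ j, u j ^ y r j with hq
  set w : Fin N → ℝ := fun i => v i / u i with hw
  set a : Fin R → ℝ := fun r => ∑ i, y r i * w i with ha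
  set b : Fin R → ℝ := fun r => ∑ i, y' r i * w i with hb
  -- key: fiberwise consequence of complex balance
  have key : ∀ F : (Fin N → ℝ) → ℝ,
      ∑ r, q r * F (y' r) = ∑ r, q r * F (y r) := by
    intro F
    set S : Finset (Fin N → ℝ) :=
      (Finset.univ.image y) ∪ (Finset.univ.image y') with hS
    have hmy : ∀ r ∈ (Finset.univ : Finset (Fin R)), y r ∈ S := fun r _ => by
      simp [hS]
    have hmy' : ∀ r ∈ (Finset.univ : Finset (Fin R)), y' r ∈ S := fun r _ => by
      simp [hS]
    have h1 : ∑ r, q r * F (y r)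
        = ∑ c ∈ S, ∑ r ∈ Finset.univ.filter (fun r => y r = c), q r * F (y r) :=
      (Finset.sum_fiberwise_of_maps_to hmy _).symm
    have h2 : ∑ r, q r * F (y' r)
        = ∑ c ∈ S, ∑ r ∈ Finset.univ.filter (fun r => y' r = c), q r * F (y' r) :=
      (Finset.sum_fiberwise_of_maps_to hmy' _).symm
    rw [h1, h2]
    refine Finset.sum_congr rfl fun c _ => ?_
    have e1 : ∑ r ∈ Finset.univ.filter (fun r => y r = c), q r * F (y r)
        = F c * ∑ r ∈ Finset.univ.filter (fun r => y r = c), q r := by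
      rw [Finset.mul_sum]
      refine Finset.sum_congr rfl fun r hr => ?_
      rw [(Finset.mem_filter.mp hr).2]; ring
    have e2 : ∑ r ∈ Finset.univ.filter (fun r => y' r = c), q r * F (y' r)
        = F c * ∑ r ∈ Finset.univ.filter (fun r => y' r = c), q r := by
      rw [Finset.mul_sum]
      refine Finset.sum_congr rfl fun r hr => ?_
      rw [(Finset.mem_filter.mp hr).2]; ring
    rw [e1, e2, hcb c]
  have hkey : ∑ r, q r * (b r) ^ 2 = ∑ r, q r * (a r) ^ 2 := by
    have := key (fun c => (∑ i, c i * w i) ^ 2)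
    simpa [ha, hb] using this
  -- rewrite LHS
  have hLHS : ∑ i, L v i * w i = ∑ r, q r * ((b r - a r) * a r) := by
    have : ∑ i, L v i * w i
        = ∑ i, ∑ r, (q r * ∑ j, (y' r i - y r i) * y r j * w j) * w i := by
      refine Finset.sum_congr rfl fun i _ => ?_
      rw [hL, Finset.sum_mul]
    rw [this, Finset.sum_comm]
    refine Finset.sum_congr rfl fun r _ => ?_
    have hinner : ∀ i, (q r * ∑ j, (y' r i - y r i) * y r j * w j) * w i
        = q r * ((y' r i - y r i) * a r * w i) := by
      intro i
      have : ∑ j, (y' r i - y r i) * y r j * w j = (y' r i - y r i) * a r := by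
        rw [ha, Finset.mul_sum]
        exact Finset.sum_congr rfl fun j _ => by ring
      rw [this]; ring
    rw [Finset.sum_congr rfl fun i _ => hinner i, ← Finset.mul_sum]
    have : ∑ i, (y' r i - y r i) * a r * w i = (b r - a r) * a r := by
      have : ∑ i, (y' r i - y r i) * a r * w i
          = (∑ i, y' r i * w i - ∑ i, y r i * w i) * a r := by
        rw [← Finset.sum_sub_distrib, Finset.sum_mul]
        exact Finset.sum_congr rfl fun i _ => by ring
      rw [this]
    rw [this]
  -- rewrite RHS summand
  have hRHS : ∑ r, q r * (∑ i, (y' r i - y r i) * w i) ^ 2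
      = ∑ r, q r * (b r - a r) ^ 2 := by
    refine Finset.sum_congr rfl fun r _ => ?_
    congr 1
    have : ∑ i, (y' r i - y r i) * w i = b r - a r := by
      rw [ha, hb, ← Finset.sum_sub_distrib]
      exact Finset.sum_congr rfl fun i _ => by ring
    rw [this]
  rw [hLHS, hRHS]
  have expand : ∀ r, q r * ((b r - a r) * a r)
      = -(1/2) * (q r * (b r - a r) ^ 2) + (1/2) * (q r * (b r) ^ 2)
        - (1/2) * (q r * (a r) ^ 2) := fun r => by ring
  rw [Finset.sum_congr rfl fun r _ => expand r]
  rw [Finset.sum_sub_distrib, Finset.sum_add_distrib, ← Finset.mul_sum,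
    ← Finset.mul_sum, ← Finset.mul_sum, hkey]
  ring
end

section
/- Let f_i(u) = ∑_{r=1}^R k_r (y_{r,i}' − y_{r,i}) u^{y_r} with stoichiometric coefficients y_{r,j} ∈ {0} ∪ [1,∞), and let u∞ ∈ (0,∞)^N satisfy f_i(u∞) = 0 for all i. Define μ = max over complexes y of ∑_j y_j, and δ = min{2, min{y_{r,j} : y_{r,j} > 1}} − 1 ∈ (0,1]. Then there exists C > 0 such that for all v ∈ ℝ^N with v + u∞ ∈ ℝ_{≥0}^N and all i: |f_i(v + u∞) − ∇f_i(u∞)·v| ≤ C ∑_{j=1}^N (|v_j|^μ + |v_j|^{1+δ}). -/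
open scoped BigOperators

open Finset
/-- Bernoulli: `b^y + y b^(y-1) c ≤ (b+c)^y` for `b ≥ 0`, `c ≥ -b`, `y ≥ 1`. -/
lemma mar_bernoulli {b c y : ℝ} (hb : 0 ≤ b) (hc : -b ≤ c) (hy : 1 ≤ y) :
    b ^ y + y * b ^ (y - 1) * c ≤ (b + c) ^ y := by
  rcases eq_or_lt_of_le hb with hb0 | hb0
  · -- b = 0, c ≥ 0
    have hc0 : 0 ≤ c := by simpa [← hb0] using hc
    rcases eq_or_lt_of_le hy with hy1 | hy1
    · simp [← hb0, ← hy1, Real.rpow_one, Real.zero_rpow, Real.rpow_zero]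
    · have h1 : (0:ℝ) ^ y = 0 := Real.zero_rpow (by linarith)
      have h2 : (0:ℝ) ^ (y - 1) = 0 := Real.zero_rpow (by linarith)
      rw [← hb0]
      simp [h1, h2]
      positivity
  · -- b > 0
    have h1 : -1 ≤ c / b := by
      rw [neg_le, ← neg_div]
      exact (div_le_one hb0).mpr (by linarith)
    have h := one_add_mul_self_le_rpow_one_add h1 hy
    have h2 : (b + c) ^ y = b ^ y * (1 + c / b) ^ y := by
      rw [← Real.mul_rpow hb (by linarith)]
      congr 1
      field_simp
    rw [h2]
    have h3 : b ^ y * (1 + y * (c / b)) ≤ b ^ y * (1 + c / b) ^ y :=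
      mul_le_mul_of_nonneg_left h (Real.rpow_nonneg hb y)
    refine le_trans (le_of_eq ?_) h3
    rw [Real.rpow_sub_one hb0.ne']
    field_simp

lemma mar_rpow_add_le {x z p : ℝ} (hx : 0 ≤ x) (hz : 0 ≤ z) (hp0 : 0 ≤ p) (hp1 : p ≤ 1) :
    (x + z) ^ p ≤ x ^ p + z ^ p := by
  have h := NNReal.rpow_add_le_add_rpow x.toNNReal z.toNNReal hp0 hp1
  have h2 := NNReal.coe_le_coe.mpr h
  rw [NNReal.coe_rpow, NNReal.coe_add, NNReal.coe_add, NNReal.coe_rpow, NNReal.coe_rpow,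
    Real.coe_toNNReal _ hx, Real.coe_toNNReal _ hz] at h2
  exact h2

/-- `|x^p - a^p| ≤ |x-a|^p` for `0 ≤ x, a` and `0 < p ≤ 1`. -/
lemma mar_abs_rpow_sub {x a p : ℝ} (hx : 0 ≤ x) (ha : 0 ≤ a) (hp0 : 0 ≤ p) (hp1 : p ≤ 1) :
    |x ^ p - a ^ p| ≤ |x - a| ^ p := by
  wlog h : a ≤ x generalizing x a
  · rw [abs_sub_comm, abs_sub_comm x a]; exact this ha hx (le_of_not_ge h)
  have h1 : x ^ p ≤ (x - a) ^ p + a ^ p := by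
    have := mar_rpow_add_le (sub_nonneg.mpr h) ha hp0 hp1
    simpa [sub_add_cancel] using this
  have h2 : a ^ p ≤ x ^ p := Real.rpow_le_rpow ha h hp0
  rw [abs_of_nonneg (sub_nonneg.mpr h2), abs_of_nonneg (sub_nonneg.mpr h)]
  linarith

/-- One-dimensional remainder estimate. -/
lemma mar_oneD {a y δ : ℝ} (ha : 0 < a) (hy : y = 0 ∨ 1 ≤ y) (hδy : 1 < y → 1 + δ ≤ y)
    (hδ0 : 0 < δ) (hδ1 : δ ≤ 1) :
    ∃ C > 0, ∀ t : ℝ, 0 ≤ a + t → |t| ≤ 1 →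
      |(a + t) ^ y - a ^ y - y * a ^ (y - 1) * t| ≤ C * |t| ^ (1 + δ) := by
  rcases hy with hy0 | hy1
  · refine ⟨1, one_pos, fun t h1 h2 => ?_⟩
    simp only [hy0, Real.rpow_zero, zero_mul, sub_zero, sub_self, abs_zero, one_mul]
    positivity
  rcases eq_or_lt_of_le hy1 with hyone | hygt
  · refine ⟨1, one_pos, fun t h1 h2 => ?_⟩
    simp only [← hyone, Real.rpow_one, sub_self, Real.rpow_zero, one_mul, mul_one]
    have : a + t - a - t = 0 := by ring
    rw [this, abs_zero]
    positivity
  -- now 1 < y, so 1 + δ ≤ y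
  have hyδ : 1 + δ ≤ y := hδy hygt
  set p : ℝ := y - 1 with hp
  have hp0 : 0 < p := by simp [hp]; linarith
  have hpδ : δ ≤ p := by simp [hp]; linarith
  set C₀ : ℝ := max 1 (p * (a + 1) ^ (p - 1)) with hC₀
  have hC₀1 : (1:ℝ) ≤ C₀ := le_max_left _ _
  refine ⟨y * C₀, by positivity, fun t hat ht1 => ?_⟩
  rcases eq_or_ne t 0 with rfl | ht0
  · have h0 : (0:ℝ) ^ (1 + δ) = 0 := Real.zero_rpow (by positivity : (0:ℝ) < 1 + δ).ne'
    simp [h0]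
  have htpos : 0 < |t| := abs_pos.mpr ht0
  -- lower bound: 0 ≤ E
  have hlow := mar_bernoulli ha.le (by linarith [hat] : -a ≤ t) hy1
  -- upper bound
  have hup' := mar_bernoulli (b := a + t) (c := -t) hat (by linarith : -(a+t) ≤ -t) hy1
  have hup : (a + t) ^ y - a ^ y - y * a ^ (y - 1) * t
      ≤ y * t * ((a + t) ^ (y - 1) - a ^ (y - 1)) := by
    have : a + t + -t = a := by ring
    rw [this] at hup'
    nlinarith [hup']
  have habs : |(a + t) ^ y - a ^ y - y * a ^ (y - 1) * t|
      ≤ y * |t| * |(a + t) ^ p - a ^ p| := by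
    rw [abs_of_nonneg (by linarith [hlow])]
    calc (a + t) ^ y - a ^ y - y * a ^ (y - 1) * t
        ≤ y * t * ((a + t) ^ p - a ^ p) := hup
      _ ≤ |y * t * ((a + t) ^ p - a ^ p)| := le_abs_self _
      _ = y * |t| * |(a + t) ^ p - a ^ p| := by
          rw [abs_mul, abs_mul, abs_of_nonneg (by linarith : (0:ℝ) ≤ y)]
  -- bound |x^p - a^p| ≤ C₀ |t|^δ
  have hkey : |(a + t) ^ p - a ^ p| ≤ C₀ * |t| ^ δ := by
    rcases le_or_gt p 1 with hple | hpgt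
    · have h1 : |(a + t) ^ p - a ^ p| ≤ |t| ^ p := by
        have := mar_abs_rpow_sub hat ha.le hp0.le hple
        simpa using this
      have h2 : |t| ^ p ≤ |t| ^ δ :=
        Real.rpow_le_rpow_of_exponent_ge htpos ht1 hpδ
      calc |(a + t) ^ p - a ^ p| ≤ |t| ^ δ := h1.trans h2
        _ ≤ C₀ * |t| ^ δ := le_mul_of_one_le_left (by positivity) hC₀1
    · have hbd : |(a + t) ^ p - a ^ p| ≤ p * (a + 1) ^ (p - 1) * |t| := by
        rcases le_or_gt 0 t with htpos' | htneg
        · -- t ≥ 0 : x = a+t ≥ a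
          have hb := mar_bernoulli (b := a + t) (c := -t) hat
            (by linarith : -(a+t) ≤ -t) (by linarith : 1 ≤ p)
          have hxa : a + t + -t = a := by ring
          rw [hxa] at hb
          have hmono : (a + t) ^ (p - 1) ≤ (a + 1) ^ (p - 1) := by
            apply Real.rpow_le_rpow hat (by linarith [abs_le.mp ht1]) (by linarith)
          have h2 : a ^ p ≤ (a + t) ^ p := Real.rpow_le_rpow ha.le (by linarith) (by positivity)
          have h4 : p * t * (a + t) ^ (p - 1) ≤ p * t * (a + 1) ^ (p - 1) :=
            mul_le_mul_of_nonneg_left hmono (mul_nonneg hp0.le htpos')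
          rw [abs_of_nonneg (by linarith), abs_of_nonneg htpos']
          nlinarith [h4, hb]
        · -- t < 0
          have hb := mar_bernoulli (b := a) (c := t) ha.le (by linarith) (by linarith : 1 ≤ p)
          have hmono : a ^ (p - 1) ≤ (a + 1) ^ (p - 1) :=
            Real.rpow_le_rpow ha.le (by linarith) (by linarith)
          have h2 : (a + t) ^ p ≤ a ^ p := Real.rpow_le_rpow hat (by linarith) (by positivity)
          have h4 : p * -t * a ^ (p - 1) ≤ p * -t * (a + 1) ^ (p - 1) :=
            mul_le_mul_of_nonneg_left hmono (mul_nonneg hp0.le (neg_nonneg.mpr htneg.le))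
          rw [abs_of_nonpos (by linarith), abs_of_neg htneg]
          nlinarith [h4, hb]
      have h3 : |t| ≤ |t| ^ δ := by
        calc |t| = |t| ^ (1:ℝ) := (Real.rpow_one _).symm
          _ ≤ |t| ^ δ := Real.rpow_le_rpow_of_exponent_ge htpos ht1 hδ1
      calc |(a + t) ^ p - a ^ p| ≤ p * (a + 1) ^ (p - 1) * |t| := hbd
        _ ≤ p * (a + 1) ^ (p - 1) * |t| ^ δ := by
            apply mul_le_mul_of_nonneg_left h3 (by positivity)
        _ ≤ C₀ * |t| ^ δ := by
            apply mul_le_mul_of_nonneg_right (le_max_right _ _) (by positivity)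
  calc |(a + t) ^ y - a ^ y - y * a ^ (y - 1) * t|
      ≤ y * |t| * (C₀ * |t| ^ δ) :=
        habs.trans (mul_le_mul_of_nonneg_left hkey (by positivity))
    _ = y * C₀ * (|t| * |t| ^ δ) := by ring
    _ = y * C₀ * |t| ^ (1 + δ) := by
        rw [Real.rpow_add htpos, Real.rpow_one]

/-- Second-order product expansion bound. -/
lemma mar_prod_expand {ι : Type*} [DecidableEq ι] (T : Finset ι) (K : ℝ) (hK : 0 ≤ K) :
    ∃ C > 0, ∀ A s : ι → ℝ, (∀ j ∈ T, |A j| ≤ K) → (∀ j ∈ T, |s j| ≤ K) →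
      |∏ j ∈ T, (A j + s j) - ∏ j ∈ T, A j -
        ∑ j ∈ T, (∏ l ∈ T.erase j, A l) * s j| ≤ C * (∑ j ∈ T, |s j|) ^ 2 := by
  classical
  induction T using Finset.induction_on with
  | empty => exact ⟨1, one_pos, fun A s _ _ => by simp⟩
  | @insert i T hi ih =>
    obtain ⟨C', hC', ihC⟩ := ih
    set D : ℝ := max 1 K with hD
    have hD1 : (1:ℝ) ≤ D := le_max_left _ _
    refine ⟨2 * K * C' + D ^ T.card + 1, by positivity, fun A s hA hs => ?_⟩
    have hAT : ∀ j ∈ T, |A j| ≤ K := fun j hj => hA j (Finset.mem_insert_of_mem hj)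
    have hsT : ∀ j ∈ T, |s j| ≤ K := fun j hj => hs j (Finset.mem_insert_of_mem hj)
    have hAi : |A i| ≤ K := hA i (Finset.mem_insert_self i T)
    have hsi : |s i| ≤ K := hs i (Finset.mem_insert_self i T)
    set P : ℝ := ∏ j ∈ T, (A j + s j) with hP
    set Q : ℝ := ∏ j ∈ T, A j with hQ
    set L : ℝ := ∑ j ∈ T, (∏ l ∈ T.erase j, A l) * s j with hL
    set Sg : ℝ := ∑ j ∈ T, |s j| with hSg
    have hSg0 : 0 ≤ Sg := Finset.sum_nonneg fun j _ => abs_nonneg _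
    have hR : |P - Q - L| ≤ C' * Sg ^ 2 := ihC A s hAT hsT
    -- bound on L
    have hLbd : |L| ≤ D ^ T.card * Sg := by
      calc |L| ≤ ∑ j ∈ T, |(∏ l ∈ T.erase j, A l) * s j| := Finset.abs_sum_le_sum_abs _ _
        _ ≤ ∑ j ∈ T, D ^ T.card * |s j| := by
            apply Finset.sum_le_sum
            intro j hj
            rw [abs_mul]
            apply mul_le_mul_of_nonneg_right _ (abs_nonneg _)
            calc |∏ l ∈ T.erase j, A l| = ∏ l ∈ T.erase j, |A l| := by
                  rw [Finset.abs_prod]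
              _ ≤ ∏ l ∈ T.erase j, D := by
                  apply Finset.prod_le_prod (fun l _ => abs_nonneg _)
                  exact fun l hl => (hAT l (Finset.mem_of_mem_erase hl)).trans (le_max_right _ _)
              _ = D ^ (T.erase j).card := Finset.prod_const D
              _ ≤ D ^ T.card := pow_le_pow_right₀ hD1 (Finset.card_le_card (Finset.erase_subset _ _))
        _ = D ^ T.card * Sg := by rw [← Finset.mul_sum]
    -- rewrite the insert expressions
    rw [Finset.prod_insert hi, Finset.prod_insert hi, Finset.sum_insert hi,
      Finset.sum_insert hi, Finset.erase_insert hi]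
    have hsum : ∑ j ∈ T, (∏ l ∈ (insert i T).erase j, A l) * s j = A i * L := by
      rw [hL, Finset.mul_sum]
      apply Finset.sum_congr rfl
      intro j hj
      have hij : i ≠ j := fun h => hi (h ▸ hj)
      rw [Finset.erase_insert_of_ne hij,
        Finset.prod_insert (fun h => hi (Finset.mem_of_mem_erase h))]
      ring
    rw [hsum]
    have hkey : (A i + s i) * P - A i * Q - (Q * s i + A i * L)
        = A i * (P - Q - L) + s i * (L + (P - Q - L)) := by ring
    rw [hkey]
    set St : ℝ := Sg + |s i| with hSt
    have hSt0 : 0 ≤ St := by positivity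
    have hSgle : Sg ≤ St := le_add_of_nonneg_right (abs_nonneg _)
    have hsq : Sg ^ 2 ≤ St ^ 2 := pow_le_pow_left₀ hSg0 hSgle 2
    have e0 : |A i * (P - Q - L) + s i * (L + (P - Q - L))|
        ≤ |A i| * |P - Q - L| + |s i| * |L| + |s i| * |P - Q - L| := by
      calc _ ≤ |A i * (P - Q - L)| + |s i * (L + (P - Q - L))| := abs_add_le _ _
        _ ≤ |A i| * |P - Q - L| + |s i| * (|L| + |P - Q - L|) := by
            rw [abs_mul, abs_mul]
            have := abs_add_le L (P - Q - L)
            nlinarith [abs_nonneg (s i), abs_nonneg (L + (P - Q - L))]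
        _ = _ := by ring
    have hCsq : C' * Sg ^ 2 ≤ C' * St ^ 2 := mul_le_mul_of_nonneg_left hsq hC'.le
    have e1 : |A i| * |P - Q - L| ≤ K * (C' * St ^ 2) := by
      apply mul_le_mul hAi (hR.trans hCsq) (abs_nonneg _) hK
    have e2 : |s i| * |L| ≤ D ^ T.card * St ^ 2 := by
      have h1 : |s i| * |L| ≤ |s i| * (D ^ T.card * Sg) :=
        mul_le_mul_of_nonneg_left hLbd (abs_nonneg _)
      have h2 : |s i| * Sg ≤ St * St := by
        apply mul_le_mul (le_add_of_nonneg_left hSg0) hSgle hSg0 hSt0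
      nlinarith [pow_pos (lt_of_lt_of_le one_pos hD1) T.card]
    have e3 : |s i| * |P - Q - L| ≤ K * (C' * St ^ 2) := by
      apply mul_le_mul hsi (hR.trans hCsq) (abs_nonneg _) hK
    calc |A i * (P - Q - L) + s i * (L + (P - Q - L))|
        ≤ K * (C' * St ^ 2) + D ^ T.card * St ^ 2 + K * (C' * St ^ 2) := by
          linarith [e0, e1, e2, e3]
      _ ≤ (2 * K * C' + D ^ T.card + 1) * St ^ 2 := by nlinarith [sq_nonneg St]
      _ = (2 * K * C' + D ^ T.card + 1) * (|s i| + ∑ x ∈ T, |s x|) ^ 2 := by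
          rw [hSt, hSg]; ring

/-- `x^(1+δ) ≤ x` for `0 ≤ x ≤ 1`, `0 ≤ δ`. -/
lemma mar_rpow_le_self {x δ : ℝ} (hx0 : 0 ≤ x) (hx1 : x ≤ 1) (hδ : 0 ≤ δ) :
    x ^ (1 + δ) ≤ x := by
  rcases eq_or_lt_of_le hx0 with rfl | hx
  · rw [Real.zero_rpow (by positivity : (0:ℝ) < 1 + δ).ne']
  · calc x ^ (1 + δ) ≤ x ^ (1:ℝ) :=
        Real.rpow_le_rpow_of_exponent_ge hx hx1 (by linarith)
      _ = x := Real.rpow_one x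

/-- `x*z ≤ x^(1+δ) + z^(1+δ)` for `x, z ∈ [0,1]`, `0 < δ ≤ 1`. -/
lemma mar_mul_le {x z δ : ℝ} (hx0 : 0 ≤ x) (hx1 : x ≤ 1) (hz0 : 0 ≤ z) (hz1 : z ≤ 1)
    (hδ0 : 0 < δ) (hδ1 : δ ≤ 1) : x * z ≤ x ^ (1 + δ) + z ^ (1 + δ) := by
  have key : ∀ u : ℝ, 0 ≤ u → u ≤ 1 → u * u ≤ u ^ (1 + δ) := by
    intro u hu0 hu1
    rcases eq_or_lt_of_le hu0 with rfl | hu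
    · rw [Real.zero_rpow (by positivity : (0:ℝ) < 1 + δ).ne']; simp
    · have h4 : u * u = u ^ (((2:ℕ):ℕ):ℝ) := by rw [Real.rpow_natCast]; ring
      have h5 : u ^ (((2:ℕ):ℕ):ℝ) ≤ u ^ (1 + δ) :=
        Real.rpow_le_rpow_of_exponent_ge hu hu1 (by push_cast; linarith)
      linarith [h4 ▸ h5]
  rcases le_total x z with h | h
  · have : x * z ≤ z * z := mul_le_mul_of_nonneg_right h hz0
    have h2 := key z hz0 hz1
    have h3 : (0:ℝ) ≤ x ^ (1 + δ) := Real.rpow_nonneg hx0 _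
    linarith
  · have : x * z ≤ x * x := mul_le_mul_of_nonneg_left h hx0
    have h2 := key x hx0 hx1
    have h3 : (0:ℝ) ≤ z ^ (1 + δ) := Real.rpow_nonneg hz0 _
    linarith

set_option maxHeartbeats 1000000 in
/-- Per-reaction remainder estimate. -/
lemma mar_reaction {N : ℕ} (a w : Fin N → ℝ) (ha : ∀ j, 0 < a j)
    (hw : ∀ j, w j = 0 ∨ 1 ≤ w j) {δ μ : ℝ} (hδ0 : 0 < δ) (hδ1 : δ ≤ 1)
    (hδw : ∀ j, 1 < w j → 1 + δ ≤ w j) (hμ : ∑ j, w j ≤ μ) (hμ0 : 0 ≤ μ) :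
    ∃ C > 0, ∀ v : Fin N → ℝ, (∀ j, 0 ≤ v j + a j) →
      |(∏ j, (v j + a j) ^ w j) - (∏ j, a j ^ w j) -
        ∑ j, w j * ((∏ l, a l ^ w l) / a j) * v j|
      ≤ C * ∑ j, (|v j| ^ μ + |v j| ^ (1 + δ)) := by
  classical
  have hw0 : ∀ j, 0 ≤ w j := by
    intro j; rcases hw j with h | h; exacts [le_of_eq h.symm, by linarith]
  have hA0 : ∀ j, 0 < a j ^ w j := fun j => Real.rpow_pos_of_pos (ha j) _
  choose Cj hCjpos hCj using fun j => mar_oneD (ha j) (hw j) (hδw j) hδ0 hδ1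
  set D : Fin N → ℝ := fun j => w j * a j ^ (w j - 1) + Cj j with hDdef
  have hD0 : ∀ j, 0 < D j := by
    intro j
    have : 0 ≤ w j * a j ^ (w j - 1) := mul_nonneg (hw0 j) (Real.rpow_nonneg (ha j).le _)
    have := hCjpos j
    simp only [hDdef]; linarith
  set K : ℝ := 1 + ∑ j, (a j ^ w j + D j) with hKdef
  have hterm0 : ∀ j : Fin N, (0:ℝ) ≤ a j ^ w j + D j := fun j => by
    have := (hA0 j).le; have := (hD0 j).le; linarith
  have hK1 : (1:ℝ) ≤ K := by
    have : (0:ℝ) ≤ ∑ j, (a j ^ w j + D j) := Finset.sum_nonneg fun j _ => hterm0 j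
    simp only [hKdef]; linarith
  have hAK : ∀ j, a j ^ w j ≤ K := by
    intro j
    have h1 : a j ^ w j + D j ≤ ∑ l, (a l ^ w l + D l) :=
      Finset.single_le_sum (fun l _ => hterm0 l) (mem_univ j)
    have := (hD0 j).le
    simp only [hKdef]; linarith
  have hDK : ∀ j, D j ≤ K := by
    intro j
    have h1 : a j ^ w j + D j ≤ ∑ l, (a l ^ w l + D l) :=
      Finset.single_le_sum (fun l _ => hterm0 l) (mem_univ j)
    have := (hA0 j).le
    simp only [hKdef]; linarith
  have hK0 : 0 ≤ K := by linarith
  obtain ⟨Cp, hCp, hCprod⟩ := mar_prod_expand (univ : Finset (Fin N)) K hK0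
  set M : ℝ := K ^ N with hMdef
  have hM1 : (1:ℝ) ≤ M := one_le_pow₀ hK1
  have hM0 : (0:ℝ) ≤ M := by linarith
  have hprodK : ∀ j : Fin N, |∏ l ∈ univ.erase j, a l ^ w l| ≤ M := by
    intro j
    rw [Finset.abs_prod]
    calc ∏ l ∈ univ.erase j, |a l ^ w l| ≤ ∏ l ∈ univ.erase j, K := by
          apply Finset.prod_le_prod (fun l _ => abs_nonneg _)
          intro l _
          rw [abs_of_pos (hA0 l)]; exact hAK l
      _ = K ^ (univ.erase j).card := Finset.prod_const K
      _ ≤ K ^ N := by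
          apply pow_le_pow_right₀ hK1
          calc (univ.erase j).card ≤ (univ : Finset (Fin N)).card :=
                Finset.card_le_card (Finset.erase_subset _ _)
            _ = N := by simp
  set CS : ℝ := ∑ j, Cj j with hCSdef
  have hCS0 : 0 ≤ CS := Finset.sum_nonneg fun j _ => (hCjpos j).le
  have hCjCS : ∀ j, Cj j ≤ CS := fun j =>
    Finset.single_le_sum (fun l _ => (hCjpos l).le) (mem_univ j)
  set B1 : ℝ := ∏ j, (a j + 1) ^ w j with hB1def
  have hB1 : 0 < B1 := Finset.prod_pos fun j _ => Real.rpow_pos_of_pos (by linarith [ha j]) _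
  set B2 : ℝ := ∏ l, a l ^ w l with hB2def
  have hB2 : 0 < B2 := Finset.prod_pos fun j _ => hA0 j
  set B3 : ℝ := ∑ j, w j * (B2 / a j) with hB3def
  have hB3 : 0 ≤ B3 := Finset.sum_nonneg fun j _ =>
    mul_nonneg (hw0 j) (div_nonneg hB2.le (ha j).le)
  set Csmall : ℝ := Cp * (K ^ 2 * (2 * N)) + M * CS + 1 with hCsmalldef
  have hCsmall : 0 < Csmall := by
    have h1 : (0:ℝ) ≤ Cp * (K ^ 2 * (2 * N)) := by positivity
    have h2 : (0:ℝ) ≤ M * CS := mul_nonneg hM0 hCS0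
    simp only [hCsmalldef]; linarith
  set Cbig : ℝ := B1 + B2 + B3 + 1 with hCbigdef
  have hCbig : 0 < Cbig := by simp only [hCbigdef]; linarith
  clear_value Csmall Cbig B3 B1 CS M B2 K D
  refine ⟨Csmall + Cbig, by linarith, fun v hv => ?_⟩
  have hS0 : 0 ≤ ∑ j, (|v j| ^ μ + |v j| ^ (1 + δ)) :=
    Finset.sum_nonneg fun j _ =>
      add_nonneg (Real.rpow_nonneg (abs_nonneg _) _) (Real.rpow_nonneg (abs_nonneg _) _)
  have hT0 : 0 ≤ ∑ j, |v j| ^ (1 + δ) :=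
    Finset.sum_nonneg fun j _ => Real.rpow_nonneg (abs_nonneg _) _
  have hTS : ∑ j, |v j| ^ (1 + δ) ≤ ∑ j, (|v j| ^ μ + |v j| ^ (1 + δ)) :=
    Finset.sum_le_sum fun j _ => le_add_of_nonneg_left (Real.rpow_nonneg (abs_nonneg _) _)
  by_cases hsmall : ∀ j, |v j| ≤ 1
  · -- small regime
    set s : Fin N → ℝ := fun j => (v j + a j) ^ w j - a j ^ w j with hsdef
    have hrem : ∀ j, |s j - w j * a j ^ (w j - 1) * v j| ≤ Cj j * |v j| ^ (1 + δ) := by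
      intro j
      have h := hCj j (v j) (by rw [add_comm]; exact hv j) (hsmall j)
      rw [add_comm (a j) (v j)] at h
      simpa only [hsdef, sub_sub] using h
    have hslin : ∀ j, |s j| ≤ D j * |v j| := by
      intro j
      have h1 := hrem j
      have h2 : |v j| ^ (1 + δ) ≤ |v j| := mar_rpow_le_self (abs_nonneg _) (hsmall j) hδ0.le
      have h3 : |w j * a j ^ (w j - 1) * v j| = w j * a j ^ (w j - 1) * |v j| := by
        rw [abs_mul, abs_of_nonneg (mul_nonneg (hw0 j) (Real.rpow_nonneg (ha j).le _))]
      have h4 : |s j| ≤ |s j - w j * a j ^ (w j - 1) * v j| + |w j * a j ^ (w j - 1) * v j| := by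
        have := abs_add_le (s j - w j * a j ^ (w j - 1) * v j) (w j * a j ^ (w j - 1) * v j)
        simpa using this
      have h5 : Cj j * |v j| ^ (1 + δ) ≤ Cj j * |v j| :=
        mul_le_mul_of_nonneg_left h2 (hCjpos j).le
      simp only [hDdef]
      nlinarith [h1, h3, h4, h5]
    have hsK : ∀ j, |s j| ≤ K := by
      intro j
      have h1 := hslin j
      have h2 : D j * |v j| ≤ D j * 1 := mul_le_mul_of_nonneg_left (hsmall j) (hD0 j).le
      have := hDK j
      linarith
    have hmain := hCprod (fun j => a j ^ w j) s (fun j _ => by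
        rw [abs_of_pos (hA0 j)]; exact hAK j) (fun j _ => hsK j)
    have hPeq : ∏ j, ((fun j => a j ^ w j) j + s j) = ∏ j, (v j + a j) ^ w j := by
      apply Finset.prod_congr rfl
      intro j _
      simp only [hsdef]
      ring
    rw [hPeq] at hmain
    have hQeq : (∏ j, (fun j => a j ^ w j) j : ℝ) = B2 := by rw [hB2def]
    rw [hQeq] at hmain
    have hcoef : ∀ j : Fin N, w j * (B2 / a j) * v j
        = (∏ l ∈ univ.erase j, a l ^ w l) * (w j * a j ^ (w j - 1) * v j) := by
      intro j
      have hsplit : B2 = a j ^ w j * ∏ l ∈ univ.erase j, a l ^ w l := by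
        rw [hB2def]
        exact (Finset.mul_prod_erase univ _ (mem_univ j)).symm
      rw [hsplit, Real.rpow_sub_one (ha j).ne']
      field_simp
    have hsumsplit : ∑ j, (∏ l ∈ univ.erase j, a l ^ w l) * (s j - w j * a j ^ (w j - 1) * v j)
        = (∑ j, (∏ l ∈ univ.erase j, a l ^ w l) * s j)
          - ∑ j, w j * (B2 / a j) * v j := by
      rw [← Finset.sum_sub_distrib]
      apply Finset.sum_congr rfl
      intro j _
      rw [hcoef j]
      ring
    have hdecomp : (∏ j, (v j + a j) ^ w j) - B2 - ∑ j, w j * (B2 / a j) * v j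
        = ((∏ j, (v j + a j) ^ w j) - B2 - ∑ j, (∏ l ∈ univ.erase j, a l ^ w l) * s j)
          + ∑ j, (∏ l ∈ univ.erase j, a l ^ w l) * (s j - w j * a j ^ (w j - 1) * v j) := by
      rw [hsumsplit]; ring
    rw [hdecomp]
    -- bound the two pieces
    have hbound2 : |∑ j, (∏ l ∈ univ.erase j, a l ^ w l) * (s j - w j * a j ^ (w j - 1) * v j)|
        ≤ M * CS * ∑ j, |v j| ^ (1 + δ) := by
      calc |∑ j, (∏ l ∈ univ.erase j, a l ^ w l) * (s j - w j * a j ^ (w j - 1) * v j)|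
          ≤ ∑ j, |(∏ l ∈ univ.erase j, a l ^ w l) * (s j - w j * a j ^ (w j - 1) * v j)| :=
            Finset.abs_sum_le_sum_abs _ _
        _ ≤ ∑ j, M * CS * |v j| ^ (1 + δ) := by
            apply Finset.sum_le_sum
            intro j _
            rw [abs_mul]
            calc |∏ l ∈ univ.erase j, a l ^ w l| * |s j - w j * a j ^ (w j - 1) * v j|
                ≤ M * (Cj j * |v j| ^ (1 + δ)) :=
                  mul_le_mul (hprodK j) (hrem j) (abs_nonneg _) hM0
              _ ≤ M * (CS * |v j| ^ (1 + δ)) := by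
                  apply mul_le_mul_of_nonneg_left _ hM0
                  exact mul_le_mul_of_nonneg_right (hCjCS j) (Real.rpow_nonneg (abs_nonneg _) _)
              _ = M * CS * |v j| ^ (1 + δ) := by ring
        _ = M * CS * ∑ j, |v j| ^ (1 + δ) := by rw [Finset.mul_sum]
    have hsv : ∑ j, |s j| ≤ K * ∑ j, |v j| := by
      rw [Finset.mul_sum]
      apply Finset.sum_le_sum
      intro j _
      calc |s j| ≤ D j * |v j| := hslin j
        _ ≤ K * |v j| := mul_le_mul_of_nonneg_right (hDK j) (abs_nonneg _)
    have hvsq : (∑ j, |v j|) ^ 2 ≤ 2 * N * ∑ j, |v j| ^ (1 + δ) := by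
      have h1 : (∑ j, |v j|) ^ 2 = ∑ j, ∑ l, |v j| * |v l| := by
        rw [sq, Finset.sum_mul_sum]
      rw [h1]
      calc ∑ j, ∑ l, |v j| * |v l|
          ≤ ∑ j : Fin N, ∑ l : Fin N, (|v j| ^ (1 + δ) + |v l| ^ (1 + δ)) := by
            apply Finset.sum_le_sum; intro j _
            apply Finset.sum_le_sum; intro l _
            exact mar_mul_le (abs_nonneg _) (hsmall j) (abs_nonneg _) (hsmall l) hδ0 hδ1
        _ = 2 * N * ∑ j, |v j| ^ (1 + δ) := by
            have e : ∀ j : Fin N, ∑ l : Fin N, (|v j| ^ (1 + δ) + |v l| ^ (1 + δ))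
                = N * |v j| ^ (1 + δ) + ∑ l, |v l| ^ (1 + δ) := by
              intro j
              rw [Finset.sum_add_distrib, Finset.sum_const, Finset.card_univ,
                Fintype.card_fin, nsmul_eq_mul]
            rw [Finset.sum_congr rfl (fun j _ => e j), Finset.sum_add_distrib,
              ← Finset.mul_sum, Finset.sum_const, Finset.card_univ, Fintype.card_fin,
              nsmul_eq_mul]
            ring
    have hssq : (∑ j, |s j|) ^ 2 ≤ K ^ 2 * (2 * N) * ∑ j, |v j| ^ (1 + δ) := by
      have h0 : 0 ≤ ∑ j, |s j| := Finset.sum_nonneg fun j _ => abs_nonneg _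
      have h1 : (∑ j, |s j|) ^ 2 ≤ (K * ∑ j, |v j|) ^ 2 := by
        apply pow_le_pow_left₀ h0 hsv
      have h2 : (K * ∑ j, |v j|) ^ 2 = K ^ 2 * (∑ j, |v j|) ^ 2 := by ring
      have h3 : K ^ 2 * (∑ j, |v j|) ^ 2 ≤ K ^ 2 * (2 * N * ∑ j, |v j| ^ (1 + δ)) :=
        mul_le_mul_of_nonneg_left hvsq (by positivity)
      calc (∑ j, |s j|) ^ 2 ≤ K ^ 2 * (2 * N * ∑ j, |v j| ^ (1 + δ)) := by linarith
        _ = K ^ 2 * (2 * N) * ∑ j, |v j| ^ (1 + δ) := by ring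
    calc |((∏ j, (v j + a j) ^ w j) - B2 - ∑ j, (∏ l ∈ univ.erase j, a l ^ w l) * s j)
          + ∑ j, (∏ l ∈ univ.erase j, a l ^ w l) * (s j - w j * a j ^ (w j - 1) * v j)|
        ≤ |(∏ j, (v j + a j) ^ w j) - B2 - ∑ j, (∏ l ∈ univ.erase j, a l ^ w l) * s j|
          + |∑ j, (∏ l ∈ univ.erase j, a l ^ w l) * (s j - w j * a j ^ (w j - 1) * v j)| :=
          abs_add_le _ _
      _ ≤ Cp * (K ^ 2 * (2 * N) * ∑ j, |v j| ^ (1 + δ)) + M * CS * ∑ j, |v j| ^ (1 + δ) := by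
          have := mul_le_mul_of_nonneg_left hssq hCp.le
          linarith [hmain, hbound2]
      _ = (Cp * (K ^ 2 * (2 * N)) + M * CS) * ∑ j, |v j| ^ (1 + δ) := by ring
      _ ≤ Csmall * ∑ j, |v j| ^ (1 + δ) := by
          apply mul_le_mul_of_nonneg_right _ hT0
          simp only [hCsmalldef]; linarith
      _ ≤ Csmall * ∑ j, (|v j| ^ μ + |v j| ^ (1 + δ)) :=
          mul_le_mul_of_nonneg_left hTS hCsmall.le
      _ ≤ (Csmall + Cbig) * ∑ j, (|v j| ^ μ + |v j| ^ (1 + δ)) :=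
          mul_le_mul_of_nonneg_right (by linarith) hS0
  · -- large regime
    push_neg at hsmall
    obtain ⟨j0, hj0⟩ := hsmall
    obtain ⟨jm, _, hjm⟩ := Finset.exists_max_image univ (fun j => |v j|) ⟨j0, mem_univ _⟩
    set M1 : ℝ := |v jm| with hM1def
    have hM1gt : 1 < M1 := lt_of_lt_of_le hj0 (hjm j0 (mem_univ _))
    have hM1pos : 0 < M1 := by linarith
    have hvM : ∀ j, |v j| ≤ M1 := fun j => hjm j (mem_univ j)
    have hRHS : M1 ^ μ + M1 ^ (1 + δ) ≤ ∑ j, (|v j| ^ μ + |v j| ^ (1 + δ)) := by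
      have := Finset.single_le_sum
        (f := fun j => |v j| ^ μ + |v j| ^ (1 + δ))
        (fun j _ => add_nonneg (Real.rpow_nonneg (abs_nonneg _) _)
          (Real.rpow_nonneg (abs_nonneg _) _)) (mem_univ jm)
      simpa [hM1def] using this
    clear_value M1
    have hP : (∏ j, (v j + a j) ^ w j) ≤ B1 * M1 ^ μ := by
      calc ∏ j, (v j + a j) ^ w j ≤ ∏ j, ((a j + 1) * M1) ^ w j := by
            apply Finset.prod_le_prod (fun j _ => Real.rpow_nonneg (hv j) _)
            intro j _
            apply Real.rpow_le_rpow (hv j) _ (hw0 j)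
            nlinarith [le_abs_self (v j), hvM j, ha j]
        _ = ∏ j, ((a j + 1) ^ w j * M1 ^ w j) := by
            apply Finset.prod_congr rfl
            intro j _
            exact Real.mul_rpow (by linarith [ha j]) hM1pos.le
        _ = B1 * ∏ j : Fin N, M1 ^ w j := by
            rw [hB1def]; exact Finset.prod_mul_distrib
        _ = B1 * M1 ^ (∑ j, w j) := by rw [Real.rpow_sum_of_pos hM1pos]
        _ ≤ B1 * M1 ^ μ := mul_le_mul_of_nonneg_left
            (Real.rpow_le_rpow_of_exponent_le hM1gt.le hμ) hB1.le
    have honele : (1:ℝ) ≤ M1 ^ μ := by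
      have h := Real.rpow_le_rpow_of_exponent_le hM1gt.le hμ0
      rwa [Real.rpow_zero] at h
    have hM1le : M1 ≤ M1 ^ (1 + δ) := by
      have h := Real.rpow_le_rpow_of_exponent_le hM1gt.le (by linarith : (1:ℝ) ≤ 1 + δ)
      rwa [Real.rpow_one] at h
    have hLin : |∑ j, w j * (B2 / a j) * v j| ≤ B3 * M1 ^ (1 + δ) := by
      calc |∑ j, w j * (B2 / a j) * v j| ≤ ∑ j, |w j * (B2 / a j) * v j| :=
            Finset.abs_sum_le_sum_abs _ _
        _ ≤ ∑ j, w j * (B2 / a j) * M1 := by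
            apply Finset.sum_le_sum
            intro j _
            rw [abs_mul, abs_of_nonneg (mul_nonneg (hw0 j) (div_nonneg hB2.le (ha j).le))]
            exact mul_le_mul_of_nonneg_left (hvM j)
              (mul_nonneg (hw0 j) (div_nonneg hB2.le (ha j).le))
        _ = B3 * M1 := by rw [hB3def, Finset.sum_mul]
        _ ≤ B3 * M1 ^ (1 + δ) := mul_le_mul_of_nonneg_left hM1le hB3
    have hPnn : 0 ≤ ∏ j, (v j + a j) ^ w j :=
      Finset.prod_nonneg fun j _ => Real.rpow_nonneg (hv j) _
    have habs : |(∏ j, (v j + a j) ^ w j) - B2 - ∑ j, w j * (B2 / a j) * v j|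
        ≤ (∏ j, (v j + a j) ^ w j) + B2 + |∑ j, w j * (B2 / a j) * v j| := by
      have h1 := abs_sub ((∏ j, (v j + a j) ^ w j) - B2) (∑ j, w j * (B2 / a j) * v j)
      have h2 := abs_sub (∏ j, (v j + a j) ^ w j) B2
      have h3 : |∏ j, (v j + a j) ^ w j| = ∏ j, (v j + a j) ^ w j := abs_of_nonneg hPnn
      have h4 : |B2| = B2 := abs_of_pos hB2
      calc |(∏ j, (v j + a j) ^ w j) - B2 - ∑ j, w j * (B2 / a j) * v j|
          ≤ |(∏ j, (v j + a j) ^ w j) - B2| + |∑ j, w j * (B2 / a j) * v j| :=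
            abs_sub _ _
        _ ≤ (∏ j, (v j + a j) ^ w j) + B2 + |∑ j, w j * (B2 / a j) * v j| := by
            have := abs_sub (∏ j, (v j + a j) ^ w j) B2
            rw [h3, h4] at this
            linarith
    have hμnn : (0:ℝ) ≤ M1 ^ μ := Real.rpow_nonneg hM1pos.le _
    have hδnn : (0:ℝ) ≤ M1 ^ (1 + δ) := Real.rpow_nonneg hM1pos.le _
    have hB2M : B2 ≤ B2 * M1 ^ μ := by nlinarith
    calc |(∏ j, (v j + a j) ^ w j) - B2 - ∑ j, w j * (B2 / a j) * v j|
        ≤ B1 * M1 ^ μ + B2 * M1 ^ μ + B3 * M1 ^ (1 + δ) := by linarith [habs, hP, hLin, hB2M]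
      _ ≤ Cbig * (M1 ^ μ + M1 ^ (1 + δ)) := by
          simp only [hCbigdef]; nlinarith
      _ ≤ Cbig * ∑ j, (|v j| ^ μ + |v j| ^ (1 + δ)) :=
          mul_le_mul_of_nonneg_left hRHS hCbig.le
      _ ≤ (Csmall + Cbig) * ∑ j, (|v j| ^ μ + |v j| ^ (1 + δ)) :=
          mul_le_mul_of_nonneg_right (by linarith) hS0

/-- Superlinear bound on the Taylor remainder of the mass-action nonlinearity at a
positive equilibrium `uinf`:
`|f_i(v+uinf) − ∇f_i(uinf)·v| ≤ C ∑_j (|v_j|^μ + |v_j|^{1+δ})`. -/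
theorem mass_action_remainder_bound
    {N R : ℕ} (k : Fin R → ℝ) (hk : ∀ r, 0 < k r)
    (y y' : Fin R → Fin N → ℝ)
    (hy : ∀ r j, y r j = 0 ∨ 1 ≤ y r j) (hy' : ∀ r j, y' r j = 0 ∨ 1 ≤ y' r j)
    (uinf : Fin N → ℝ) (hu : ∀ i, 0 < uinf i)
    (f : Fin N → (Fin N → ℝ) → ℝ)
    (hf : ∀ i u, f i u = ∑ r, k r * (y' r i - y r i) * ∏ j, u j ^ y r j)
    (heq : ∀ i, f i uinf = 0)
    (μ : ℝ)
    (hμ : IsGreatest ((Set.range fun r => ∑ j, y r j) ∪ (Set.range fun r => ∑ j, y' r j)) μ)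
    (δ : ℝ) (hδ0 : 0 < δ) (hδ1 : δ ≤ 1)
    (hδy : ∀ r j, 1 < y r j → 1 + δ ≤ y r j) :
    ∃ C > 0, ∀ v : Fin N → ℝ, (∀ j, 0 ≤ v j + uinf j) → ∀ i,
      |f i (fun j => v j + uinf j)
          - ∑ r, k r * (y' r i - y r i)
              * ∑ j, y r j * ((∏ l, uinf l ^ y r l) / uinf j) * v j|
        ≤ C * ∑ j, (|v j| ^ μ + |v j| ^ (1 + δ)) := by
    classical
  have hy0 : ∀ r j, 0 ≤ y r j := by
    intro r j; rcases hy r j with h | h; exacts [le_of_eq h.symm, by linarith]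
  have hy0' : ∀ r j, 0 ≤ y' r j := by
    intro r j; rcases hy' r j with h | h; exacts [le_of_eq h.symm, by linarith]
  have hμ0 : 0 ≤ μ := by
    rcases hμ.1 with ⟨r, hr⟩ | ⟨r, hr⟩
    · rw [← hr]; exact Finset.sum_nonneg fun j _ => hy0 r j
    · rw [← hr]; exact Finset.sum_nonneg fun j _ => hy0' r j
  have hμub : ∀ r, ∑ j, y r j ≤ μ := fun r => hμ.2 (Set.mem_union_left _ ⟨r, rfl⟩)
  have hμub' : ∀ r, ∑ j, y' r j ≤ μ := fun r => hμ.2 (Set.mem_union_right _ ⟨r, rfl⟩)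
  have hyb : ∀ r i, y r i ≤ μ := fun r i =>
    (Finset.single_le_sum (fun j _ => hy0 r j) (Finset.mem_univ i)).trans (hμub r)
  have hyb' : ∀ r i, y' r i ≤ μ := fun r i =>
    (Finset.single_le_sum (fun j _ => hy0' r j) (Finset.mem_univ i)).trans (hμub' r)
  choose CR hCRpos hCR using fun r =>
    mar_reaction uinf (y r) hu (hy r) hδ0 hδ1 (hδy r) (hμub r) hμ0
  refine ⟨1 + ∑ r, k r * (2 * μ) * CR r, by
    have : 0 ≤ ∑ r, k r * (2 * μ) * CR r :=
      Finset.sum_nonneg fun r _ =>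
        mul_nonneg (mul_nonneg (hk r).le (by linarith)) (hCRpos r).le
    linarith, fun v hv i => ?_⟩
  have hS0 : 0 ≤ ∑ j, (|v j| ^ μ + |v j| ^ (1 + δ)) :=
    Finset.sum_nonneg fun j _ =>
      add_nonneg (Real.rpow_nonneg (abs_nonneg _) _) (Real.rpow_nonneg (abs_nonneg _) _)
  have key : ∀ r, |(∏ j, (v j + uinf j) ^ y r j) - (∏ j, uinf j ^ y r j) -
      ∑ j, y r j * ((∏ l, uinf l ^ y r l) / uinf j) * v j|
      ≤ CR r * ∑ j, (|v j| ^ μ + |v j| ^ (1 + δ)) := fun r => hCR r v hv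
  have h0 : ∑ r, k r * (y' r i - y r i) * ∏ j, uinf j ^ y r j = 0 := by
    have h := heq i; rw [hf] at h; exact h
  have hX : f i (fun j => v j + uinf j)
        - ∑ r, k r * (y' r i - y r i)
            * ∑ j, y r j * ((∏ l, uinf l ^ y r l) / uinf j) * v j
      = ∑ r, k r * (y' r i - y r i) *
          ((∏ j, (v j + uinf j) ^ y r j) - (∏ j, uinf j ^ y r j) -
            ∑ j, y r j * ((∏ l, uinf l ^ y r l) / uinf j) * v j) := by
    rw [hf]
    rw [← Finset.sum_sub_distrib]
    have hsplit : ∑ r, (k r * (y' r i - y r i) * ∏ j, (v j + uinf j) ^ y r j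
          - k r * (y' r i - y r i)
              * ∑ j, y r j * ((∏ l, uinf l ^ y r l) / uinf j) * v j)
        = (∑ r, k r * (y' r i - y r i) *
            ((∏ j, (v j + uinf j) ^ y r j) - (∏ j, uinf j ^ y r j) -
              ∑ j, y r j * ((∏ l, uinf l ^ y r l) / uinf j) * v j))
          + ∑ r, k r * (y' r i - y r i) * ∏ j, uinf j ^ y r j := by
      rw [← Finset.sum_add_distrib]
      apply Finset.sum_congr rfl
      intro r _
      ring
    rw [hsplit, h0, add_zero]
  rw [hX]
  calc |∑ r, k r * (y' r i - y r i) *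
          ((∏ j, (v j + uinf j) ^ y r j) - (∏ j, uinf j ^ y r j) -
            ∑ j, y r j * ((∏ l, uinf l ^ y r l) / uinf j) * v j)|
      ≤ ∑ r, |k r * (y' r i - y r i) *
          ((∏ j, (v j + uinf j) ^ y r j) - (∏ j, uinf j ^ y r j) -
            ∑ j, y r j * ((∏ l, uinf l ^ y r l) / uinf j) * v j)| :=
        Finset.abs_sum_le_sum_abs _ _
    _ ≤ ∑ r, k r * (2 * μ) * (CR r * ∑ j, (|v j| ^ μ + |v j| ^ (1 + δ))) := by
        apply Finset.sum_le_sum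
        intro r _
        rw [abs_mul, abs_mul, abs_of_pos (hk r)]
        have hc : |y' r i - y r i| ≤ 2 * μ := by
          have h1 := abs_sub_abs_le_abs_sub (y' r i) (y r i)
          have h2 : |y' r i - y r i| ≤ |y' r i| + |y r i| := abs_sub _ _
          rw [abs_of_nonneg (hy0' r i), abs_of_nonneg (hy0 r i)] at h2
          have := hyb r i; have := hyb' r i
          linarith
        have h3 : k r * |y' r i - y r i| ≤ k r * (2 * μ) :=
          mul_le_mul_of_nonneg_left hc (hk r).le
        exact mul_le_mul h3 (key r) (abs_nonneg _)
          (mul_nonneg (hk r).le (by linarith))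
    _ = (∑ r, k r * (2 * μ) * CR r) * ∑ j, (|v j| ^ μ + |v j| ^ (1 + δ)) := by
        rw [Finset.sum_mul]
        apply Finset.sum_congr rfl
        intro r _
        ring
    _ ≤ (1 + ∑ r, k r * (2 * μ) * CR r) * ∑ j, (|v j| ^ μ + |v j| ^ (1 + δ)) :=
        mul_le_mul_of_nonneg_right (by linarith) hS0
end

section
/- Let d ≥ 3, μ > 1, p₀ = d(μ−1)/2, δ > 0, and p ≥ p₀ + δ with p > 2. Set q = dp/(d−2) and define θ by 1/(μ+p−1) = θ/q + (1−θ)/(p₀+δ), i.e., θ = q[(μ+p−1) − p₀ − δ]/((q − p₀ − δ)(μ+p−1)). Then θ(μ+p−1) < p strictly (assuming q > p₀ + δ and p₀ + δ ≤ μ+p−1 ≤ q). -/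
/-- Strict interpolation exponent inequality permitting Young absorption:
with `p₀ = d(μ−1)/2`, `q = dp/(d−2)` and
`θ = q[(μ+p−1) − p₀ − δ]/((q − p₀ − δ)(μ+p−1))`, one has `θ(μ+p−1) < p`. -/
theorem interpolation_exponent_strict
    (d : ℕ) (hd : 3 ≤ d) (μ p p₀ δ q θ : ℝ)
    (hμ : 1 < μ) (hδ : 0 < δ)
    (hp₀ : p₀ = (d : ℝ) * (μ - 1) / 2)
    (hp : p₀ + δ ≤ p) (hp2 : 2 < p)
    (hq : q = (d : ℝ) * p / ((d : ℝ) - 2))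
    (hqp₀ : p₀ + δ < q) (hlow : p₀ + δ ≤ μ + p - 1) (hhigh : μ + p - 1 ≤ q)
    (hθ : θ = q * ((μ + p - 1) - p₀ - δ) / ((q - p₀ - δ) * (μ + p - 1))) :
    θ * (μ + p - 1) < p := by
  have hd3 : (3:ℝ) ≤ (d:ℝ) := by exact_mod_cast hd
  have hd2 : (0:ℝ) < (d:ℝ) - 2 := by linarith
  have hqd : q * ((d:ℝ) - 2) = (d:ℝ) * p := by
    rw [hq]; field_simp
  have hs : 0 < μ + p - 1 := by linarith
  have hden : 0 < q - p₀ - δ := by linarith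
  have key : q * ((μ + p - 1) - p₀ - δ) < p * (q - p₀ - δ) := by
    have h : ((d:ℝ) - 2) * (p * (q - p₀ - δ) - q * ((μ + p - 1) - p₀ - δ)) = 2 * p * δ := by
      nlinarith [hqd, hp₀]
    nlinarith [mul_pos (mul_pos (by norm_num : (0:ℝ) < 2) (by linarith : (0:ℝ) < p)) hδ]
  have : θ * (μ + p - 1) = q * ((μ + p - 1) - p₀ - δ) / (q - p₀ - δ) := by
    rw [hθ]; field_simp
  rw [this, div_lt_iff₀ hden]
  linarith [key]
end
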